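/- Let G = (V,E) be a PTN with a zone partition 𝒵 and a price function P : ℕ≥1 → ℝ≥0 satisfying P(k) ≤ P(i₁) + P(i₂) for all k ∈ ℕ≥1 and all i₁, i₂ ∈ {1,…,k} with i₁ + i₂ ≥ k + 1. Then the zone tariff with single counting π(W) = P(σ_S(W)) satisfies the no-stopover property: for every path (v_1,…,v_n) with n ≥ 3 and every intermediate index i ∈ {2,…,n−1}, π((v_1,…,v_n)) ≤ π((v_1,…,v_i)) + π((v_i,…,v_n)). -/

import Mathlib

open scoped Classical

noncomputable section

/-- A zone partition of the vertex set `V`: nonempty, pairwise disjoint zones covering `V`. -/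
def IsZonePartition {V : Type*} (Z : Finset (Finset V)) : Prop :=
  (∀ A ∈ Z, A.Nonempty) ∧ (∀ A ∈ Z, ∀ B ∈ Z, A ≠ B → Disjoint A B) ∧
    ∀ v : V, ∃ A ∈ Z, v ∈ A

/-- `v` and `w` lie in a common zone of `Z`. -/
def SameZone {V : Type*} (Z : Finset (Finset V)) (v w : V) : Prop :=
  ∃ A ∈ Z, v ∈ A ∧ w ∈ A

/-- Multiple-counting zone function: one plus the number of zone borders crossed along `W`. -/
def sigmaM {V : Type*} (Z : Finset (Finset V)) (W : List V) : ℕ :=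
  1 + ((W.zip W.tail).filter (fun p => decide (¬ SameZone Z p.1 p.2))).length

/-- Single-counting zone function: the number of distinct zones met by `W`. -/
def sigmaS {V : Type*} (Z : Finset (Finset V)) (W : List V) : ℕ :=
  (Z.filter (fun A => ∃ v ∈ W, v ∈ A)).card

/-- If the price function satisfies P(k) ≤ P(i₁) + P(i₂) for all k ≥ 1 and
i₁, i₂ ∈ {1, …, k} with i₁ + i₂ ≥ k + 1, then the zone tariff with single counting
satisfies the no-stopover property: splitting a path (v_1, …, v_n), n ≥ 3, at an
intermediate station v_i (2 ≤ i ≤ n - 1, one-based) never decreases the total fare. -/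
theorem subadditive_prices_imply_no_stopover_single {V : Type*} (G : SimpleGraph V)
    (Z : Finset (Finset V)) (hZ : IsZonePartition Z)
    (P : ℕ → ℝ) (hP0 : ∀ k, 0 ≤ P k)
    (hsub : ∀ k : ℕ, 1 ≤ k → ∀ i₁ i₂ : ℕ, 1 ≤ i₁ → i₁ ≤ k → 1 ≤ i₂ → i₂ ≤ k →
      k + 1 ≤ i₁ + i₂ → P k ≤ P i₁ + P i₂) :
    ∀ W : List V, W.Chain' G.Adj → ∀ i : ℕ, 2 ≤ i → i ≤ W.length - 1 →
      P (sigmaS Z W) ≤ P (sigmaS Z (W.take i)) + P (sigmaS Z (W.drop (i - 1))) := by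
  intro W hW i hi2 hile
  classical
  obtain ⟨hne, hdisj, hcov⟩ := hZ
  have hlen : 3 ≤ W.length := by omega
  set F : List V → Finset (Finset V) := fun L => Z.filter (fun A => ∃ v ∈ L, v ∈ A) with hF
  have hcard : ∀ L : List V, sigmaS Z L = (F L).card := fun L => rfl
  have hpos : ∀ L : List V, L ≠ [] → 1 ≤ (F L).card := by
    intro L hL
    obtain ⟨v, hv⟩ := List.exists_mem_of_ne_nil L hL
    obtain ⟨A, hA, hvA⟩ := hcov v
    exact Finset.card_pos.2 ⟨A, Finset.mem_filter.2 ⟨hA, v, hv, hvA⟩⟩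
  have hmono : ∀ L L' : List V, (∀ v ∈ L, v ∈ L') → F L ⊆ F L' := by
    intro L L' h A hA
    rw [hF] at hA ⊢
    rw [Finset.mem_filter] at hA ⊢
    obtain ⟨hAZ, v, hv, hvA⟩ := hA
    exact ⟨hAZ, v, h v hv, hvA⟩
  -- the split point
  have him1 : i - 1 < W.length := by omega
  set x := W.get ⟨i - 1, him1⟩ with hx
  have hxtake : x ∈ W.take i := by
    have h1 : i - 1 < (W.take i).length := by
      simp [List.length_take]; omega
    have : (W.take i).get ⟨i - 1, h1⟩ = x := by
      simp [hx, List.getElem_take]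
    exact this ▸ List.get_mem _ ⟨i - 1, h1⟩
  have hxdrop : x ∈ W.drop (i - 1) := by
    have h1 : 0 < (W.drop (i - 1)).length := by
      simp [List.length_drop]; omega
    have : (W.drop (i - 1)).get ⟨0, h1⟩ = x := by
      simp [hx, List.getElem_drop]
    exact this ▸ List.get_mem _ ⟨0, h1⟩
  obtain ⟨A, hA, hxA⟩ := hcov x
  have hAinter : A ∈ F (W.take i) ∩ F (W.drop (i - 1)) := by
    refine Finset.mem_inter.2 ⟨?_, ?_⟩ <;>
      exact Finset.mem_filter.2 ⟨hA, _, by assumption, hxA⟩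
  -- union covers
  have hcover : F W ⊆ F (W.take i) ∪ F (W.drop (i - 1)) := by
    intro A hA'
    rw [hF, Finset.mem_filter] at hA'
    obtain ⟨hAZ, v, hv, hvA⟩ := hA'
    have : v ∈ W.take i ++ W.drop i := by
      rw [List.take_append_drop]; exact hv
    rcases List.mem_append.1 this with h | h
    · exact Finset.mem_union_left _ (Finset.mem_filter.2 ⟨hAZ, v, h, hvA⟩)
    · have : v ∈ W.drop (i - 1) := by
        have heq : W.drop i = (W.drop (i - 1)).drop 1 := by
          rw [List.drop_drop]; congr 1; omega
        exact List.drop_subset _ _ (heq ▸ h)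
      exact Finset.mem_union_right _ (Finset.mem_filter.2 ⟨hAZ, v, this, hvA⟩)
  -- cardinality facts
  have hk1 : 1 ≤ (F W).card := hpos W (by intro h; simp [h] at hlen)
  have hne1 : W.take i ≠ [] := by
    intro h
    have := congrArg List.length h
    simp only [List.length_take, List.length_nil] at this
    omega
  have hne2 : W.drop (i - 1) ≠ [] := by
    intro h
    have := congrArg List.length h
    simp only [List.length_drop, List.length_nil] at this
    omega
  have hle1 : (F (W.take i)).card ≤ (F W).card :=
    Finset.card_le_card (hmono _ _ (fun v hv => List.take_subset _ _ hv))
  have hle2 : (F (W.drop (i - 1))).card ≤ (F W).card :=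
    Finset.card_le_card (hmono _ _ (fun v hv => List.drop_subset _ _ hv))
  have hsum : (F W).card + 1 ≤ (F (W.take i)).card + (F (W.drop (i - 1))).card := by
    have h1 : (F W).card ≤ (F (W.take i) ∪ F (W.drop (i - 1))).card :=
      Finset.card_le_card hcover
    have h2 : 1 ≤ (F (W.take i) ∩ F (W.drop (i - 1))).card :=
      Finset.card_pos.2 ⟨A, hAinter⟩
    have h3 := Finset.card_union_add_card_inter (F (W.take i)) (F (W.drop (i - 1)))
    omega
  rw [hcard, hcard, hcard]
  exact hsub _ hk1 _ _ (hpos _ hne1) hle1 (hpos _ hne2) hle2 hsum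

end
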